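/- Let T be an odd positive integer, c an integer with c ≥ 0, α, ρ real with |α| < 1/2 and |ρ| ≤ (T−1)/(2T), γ real with 0 < γ ≤ T, β > 0 real, and set λ := √β·γ/√T. There is a constant C = C(c,T,α,β,γ,ρ) > 0 such that for every integer k ≥ 1 and every z ∈ ℂ with Re z > 0 and Re(1/z) ≥ k/2: |e^{βπ/(kz)}·𝓗_{c,T}(α,γ,ρ,k;z) − λ·∫_{−1}^{1} (λx+iρ)^c·e^{−πβ(x²−1)/(kz) + 2πλαx}/cosh(π(λx+iρ)) dx| ≤ C. -/

import Mathlib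

open Complex Real MeasureTheory

lemma HS_gauss_lin (p q : ℝ) (hp : 0 < p) :
    Integrable fun t : ℝ => Real.exp (-p * t ^ 2 + q * t) := by
  have h := (integrable_cexp_quadratic (b := (p : ℂ)) (by simpa using hp) (q : ℂ) 0).norm
  refine h.congr (Filter.Eventually.of_forall fun x => ?_)
  simp only [Complex.norm_exp]
  congr 1
  simp [Complex.add_re, Complex.mul_re, Complex.ofReal_re, Complex.ofReal_im,
    ← Complex.ofReal_pow]

lemma HS_gauss (p q : ℝ) (hp : 0 < p) :
    Integrable fun t : ℝ => Real.exp (-p * t ^ 2 + q * |t|) := by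
  refine ((HS_gauss_lin p q hp).add (HS_gauss_lin p (-q) hp)).mono' ?_ ?_
  · exact (Real.continuous_exp.comp (by continuity)).aestronglyMeasurable
  · refine Filter.Eventually.of_forall fun t => ?_
    simp only [Pi.add_apply]
    rw [Real.norm_eq_abs, _root_.abs_of_nonneg (Real.exp_pos _).le]
    rcases abs_choice t with h | h <;> rw [h]
    · have := (Real.exp_pos (-p * t ^ 2 + -q * t)).le; linarith
    · have h2 : Real.exp (-p * t ^ 2 + q * -t) = Real.exp (-p * t ^ 2 + -q * t) := by ring_nf
      rw [h2]
      have := (Real.exp_pos (-p * t ^ 2 + q * t)).le; linarith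

lemma HS_cosh_re (a b : ℝ) :
    (Complex.cosh ((a : ℂ) + (b : ℂ) * I)).re = Real.cosh a * Real.cos b := by
  rw [Complex.cosh_add, Complex.cosh_mul_I, Complex.sinh_mul_I]
  simp [← Complex.ofReal_cosh, ← Complex.ofReal_sinh, ← Complex.ofReal_cos, ← Complex.ofReal_sin]

lemma HS_cosh_lb (ρ l t : ℝ) (hcos : 0 < Real.cos (π * ρ)) :
    Real.cos (π * ρ) ≤ ‖Complex.cosh ((π : ℂ) * ((l : ℂ) * t + I * ρ))‖ := by
  have h : (π : ℂ) * ((l : ℂ) * t + I * ρ) = ((π * (l * t) : ℝ) : ℂ) + ((π * ρ : ℝ) : ℂ) * I := by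
    push_cast; ring
  rw [h]
  refine le_trans ?_ (Complex.abs_re_le_norm _)
  rw [HS_cosh_re, _root_.abs_of_nonneg (by nlinarith [Real.one_le_cosh (π * (l * t))])]
  nlinarith [Real.one_le_cosh (π * (l * t))]

lemma HS_normbound (c : ℕ) (l ρ : ℝ) (hcos : 0 < Real.cos (π * ρ)) (w : ℂ) (t : ℝ) :
    ‖((l : ℂ) * t + I * ρ) ^ c * Complex.exp w /
        Complex.cosh ((π : ℂ) * ((l : ℂ) * t + I * ρ))‖
      ≤ Real.exp (c * |ρ|) / Real.cos (π * ρ) * Real.exp (w.re + (c * |l|) * |t|) := by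
  rw [norm_div, norm_mul, norm_pow, Complex.norm_exp]
  have h1 : ‖(l : ℂ) * t + I * ρ‖ ≤ |l| * |t| + |ρ| := by
    refine le_trans (norm_add_le _ _) ?_
    simp [Complex.norm_real, abs_mul]
  have h2 : ‖(l : ℂ) * t + I * ρ‖ ^ c ≤ Real.exp (c * (|l| * |t| + |ρ|)) := by
    calc ‖(l : ℂ) * t + I * ρ‖ ^ c ≤ (|l| * |t| + |ρ|) ^ c :=
          pow_le_pow_left₀ (norm_nonneg _) h1 c
      _ ≤ Real.exp (|l| * |t| + |ρ|) ^ c := by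
          refine pow_le_pow_left₀ (by positivity) ?_ c
          linarith [Real.add_one_le_exp (|l| * |t| + |ρ|)]
      _ = Real.exp (c * (|l| * |t| + |ρ|)) := by rw [← Real.exp_nat_mul]
  refine le_trans (div_le_div₀ (by positivity) (mul_le_mul_of_nonneg_right h2 (Real.exp_pos _).le)
    hcos (HS_cosh_lb ρ l t hcos)) ?_
  rw [div_mul_eq_mul_div]
  rw [div_le_div_iff_of_pos_right hcos]
  rw [← Real.exp_add, ← Real.exp_add]
  exact Real.exp_le_exp.mpr (le_of_eq (by ring))

/-- `𝓗_{c,T}(α,γ,ρ,k;z) = ∫_ℝ (x+iρ)^c·e^{−πTx²/(γ²kz)+2πxα}/cosh(π(x+iρ)) dx`. -/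
noncomputable def mordellH' (T c : ℕ) (α γ ρ : ℝ) (k : ℕ) (z : ℂ) : ℂ :=
  ∫ x : ℝ, ((x : ℂ) + I * ρ) ^ c *
      Complex.exp (-(π : ℂ) * T * x ^ 2 / (γ ^ 2 * k * z) + 2 * π * x * α) /
    Complex.cosh (π * ((x : ℂ) + I * ρ))

set_option maxHeartbeats 2000000 in
/-- Approximation of `e^{βπ/(kz)}·𝓗_{c,T}(α,γ,ρ,k;z)` by a finite integral, with a
uniformly bounded error. -/
theorem H_split (T : ℕ) (hT : Odd T) (hTpos : 0 < T)
    (c : ℕ) (α ρ : ℝ) (hα : |α| < 1 / 2) (hρ : |ρ| ≤ ((T : ℝ) - 1) / (2 * T))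
    (γ : ℝ) (hγ : 0 < γ) (hγT : γ ≤ T) (β : ℝ) (hβ : 0 < β) :
    ∃ C > 0, ∀ k : ℕ, 1 ≤ k → ∀ z : ℂ, 0 < z.re → (k : ℝ) / 2 ≤ (1 / z).re →
      ‖(Complex.exp (β * π / (k * z)) * mordellH' T c α γ ρ k z -
            (Real.sqrt β * γ / Real.sqrt T : ℝ) *
              ∫ x : ℝ in (-1 : ℝ)..1,
                (((Real.sqrt β * γ / Real.sqrt T : ℝ) : ℂ) * x + I * ρ) ^ c *
                    Complex.exp (-(π : ℂ) * β * ((x : ℂ) ^ 2 - 1) / (k * z) +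
                      2 * π * (Real.sqrt β * γ / Real.sqrt T : ℝ) * α * x) /
                  Complex.cosh (π *
                    (((Real.sqrt β * γ / Real.sqrt T : ℝ) : ℂ) * x + I * ρ)))‖ ≤ C := by
  have hT0 : (0 : ℝ) < T := by exact_mod_cast hTpos
  set l : ℝ := Real.sqrt β * γ / Real.sqrt T with hl
  have hlpos : 0 < l := by rw [hl]; positivity
  have hTl : (T : ℝ) * l ^ 2 = β * γ ^ 2 := by
    rw [hl, div_pow, mul_pow, Real.sq_sqrt hβ.le, Real.sq_sqrt hT0.le]
    field_simp
  have hρhalf : |ρ| < 1 / 2 := by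
    refine lt_of_le_of_lt hρ ?_
    rw [div_lt_div_iff₀ (by positivity) (by norm_num)]
    nlinarith
  have hcos : 0 < Real.cos (π * ρ) := by
    apply Real.cos_pos_of_mem_Ioo
    constructor
    · nlinarith [abs_lt.mp hρhalf, Real.pi_pos]
    · nlinarith [abs_lt.mp hρhalf, Real.pi_pos]
  set p : ℝ := π * β / 2 with hp
  have hppos : 0 < p := by rw [hp]; positivity
  set q : ℝ := c * l + 2 * π * l * |α| with hq
  set A : ℝ := Real.exp (π * β / 2 + c * |ρ|) / Real.cos (π * ρ) with hA
  have hApos : 0 < A := by rw [hA]; positivity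
  set I0 : ℝ := ∫ t : ℝ, Real.exp (-p * t ^ 2 + q * |t|) with hI0
  have hI0nn : 0 ≤ I0 := integral_nonneg fun t => (Real.exp_pos _).le
  clear_value l p q A I0
  refine ⟨l * A * I0 + 1,
    by nlinarith [mul_nonneg (mul_nonneg hlpos.le hApos.le) hI0nn], fun k hk z hz hz2 => ?_⟩
  have hzne : z ≠ 0 := fun h => by simp [h] at hz
  have hkR : (0 : ℝ) < k := by exact_mod_cast hk
  have hkzne : (k : ℂ) * z ≠ 0 := by simp [hzne, show k ≠ 0 by omega]
  set r0 : ℝ := (((k : ℂ) * z)⁻¹).re with hr0def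
  clear_value r0
  have hr0eq : r0 = (k : ℝ)⁻¹ * (z⁻¹).re := by
    rw [hr0def, mul_inv]
    rw [show ((k : ℂ))⁻¹ = (((k : ℝ)⁻¹ : ℝ) : ℂ) by push_cast; ring]
    rw [Complex.re_ofReal_mul]
  have hr0 : 1 / 2 ≤ r0 := by
    rw [hr0eq]
    rw [one_div z] at hz2
    have := mul_le_mul_of_nonneg_left hz2 (le_of_lt (inv_pos.mpr hkR))
    calc (1 : ℝ) / 2 = (k : ℝ)⁻¹ * ((k : ℝ) / 2) := by field_simp
      _ ≤ _ := this
  have hr0pos : 0 < r0 := lt_of_lt_of_le (by norm_num) hr0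
  -- real part of the exponent
  have hure : ∀ t : ℝ, (-(π : ℂ) * β * ((t : ℂ) ^ 2 - 1) / (k * z) +
      2 * π * l * α * t).re = -(π * β) * (t ^ 2 - 1) * r0 + 2 * π * l * α * t := by
    intro t
    have h : -(π : ℂ) * β * ((t : ℂ) ^ 2 - 1) / (k * z) + 2 * (π : ℂ) * l * α * t
        = ((-(π * β) * (t ^ 2 - 1) : ℝ) : ℂ) * ((k : ℂ) * z)⁻¹
          + ((2 * π * l * α * t : ℝ) : ℂ) := by
      push_cast
      field_simp
    rw [h]
    simp only [Complex.add_re, Complex.re_ofReal_mul, Complex.ofReal_re, ← hr0def]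
  -- the integrand after substitution
  set f : ℝ → ℂ := fun t : ℝ => ((l : ℂ) * t + I * ρ) ^ c *
      Complex.exp (-(π : ℂ) * β * ((t : ℂ) ^ 2 - 1) / (k * z) + 2 * π * l * α * t) /
    Complex.cosh ((π : ℂ) * ((l : ℂ) * t + I * ρ)) with hf
  clear_value f
  -- pointwise bounds
  have hboundall : ∀ t : ℝ, ‖f t‖ ≤
      Real.exp (c * |ρ|) / Real.cos (π * ρ) * Real.exp (π * β * r0) *
        Real.exp (-(π * β * r0) * t ^ 2 + q * |t|) := by
    intro t
    simp only [hf]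
    refine le_trans (HS_normbound c l ρ hcos _ t) ?_
    rw [mul_assoc (Real.exp (↑c * |ρ|) / Real.cos (π * ρ)), ← Real.exp_add]
    refine mul_le_mul_of_nonneg_left (Real.exp_le_exp.mpr ?_) (by positivity)
    rw [hure t]
    have h1 : 2 * π * l * α * t ≤ 2 * π * l * |α| * |t| := by
      calc 2 * π * l * α * t = 2 * π * l * (α * t) := by ring
        _ ≤ 2 * π * l * |α * t| := by
            exact mul_le_mul_of_nonneg_left (le_abs_self _) (by positivity)
        _ = 2 * π * l * |α| * |t| := by rw [abs_mul]; ring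
    have h2 : ↑c * |l| * |t| = ↑c * l * |t| := by rw [_root_.abs_of_pos hlpos]
    rw [h2, hq]
    nlinarith [sq_nonneg t, hr0pos]
  have hboundtail : ∀ t : ℝ, 1 ≤ t ^ 2 → ‖f t‖ ≤
      A * Real.exp (-p * t ^ 2 + q * |t|) := by
    intro t ht
    simp only [hf]
    refine le_trans (HS_normbound c l ρ hcos _ t) ?_
    rw [hA, div_mul_eq_mul_div, div_mul_eq_mul_div, div_le_div_iff_of_pos_right hcos,
      ← Real.exp_add, ← Real.exp_add]
    refine Real.exp_le_exp.mpr ?_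
    rw [hure t]
    have h1 : 2 * π * l * α * t ≤ 2 * π * l * |α| * |t| := by
      calc 2 * π * l * α * t = 2 * π * l * (α * t) := by ring
        _ ≤ 2 * π * l * |α * t| := by
            exact mul_le_mul_of_nonneg_left (le_abs_self _) (by positivity)
        _ = 2 * π * l * |α| * |t| := by rw [abs_mul]; ring
    have h2 : ↑c * |l| * |t| = ↑c * l * |t| := by rw [_root_.abs_of_pos hlpos]
    have h3 : -(π * β) * (t ^ 2 - 1) * r0 ≤ -(π * β) * (t ^ 2 - 1) * (1 / 2) := by
      have hπβ : 0 < π * β := by positivity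
      nlinarith [mul_nonneg (mul_nonneg hπβ.le (by linarith : (0:ℝ) ≤ t ^ 2 - 1))
        (by linarith : (0:ℝ) ≤ r0 - 1 / 2)]
    rw [h2, hq, hp]
    nlinarith
  -- continuity and integrability of f
  have hcont : Continuous f := by
    rw [hf]
    have h1 : Continuous fun t : ℝ => ((l : ℂ) * t + I * ρ) :=
      (continuous_const.mul Complex.continuous_ofReal).add continuous_const
    apply Continuous.div
    · refine (h1.pow c).mul (Complex.continuous_exp.comp ?_)
      apply Continuous.add
      · apply Continuous.div_const
        fun_prop
      · fun_prop
    · exact Complex.continuous_cosh.comp (continuous_const.mul h1)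
    · intro t h
      have := HS_cosh_lb ρ l t hcos
      rw [h] at this
      simp at this
      nlinarith
  have hInt : Integrable f := by
    refine ((HS_gauss (π * β * r0) q (by positivity)).const_mul
      (Real.exp (c * |ρ|) / Real.cos (π * ρ) * Real.exp (π * β * r0))).mono'
      hcont.aestronglyMeasurable ?_
    refine Filter.Eventually.of_forall fun t => ?_
    simpa [neg_mul] using hboundall t
  -- change of variables
  have hTlC : (T : ℂ) * (l : ℂ) ^ 2 = (β : ℂ) * (γ : ℂ) ^ 2 := by exact_mod_cast hTl
  have hγC : (γ : ℂ) ≠ 0 := by exact_mod_cast hγ.ne'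
  have key : Complex.exp ((β : ℂ) * π / (k * z)) * mordellH' T c α γ ρ k z =
      l • ∫ t : ℝ, f t := by
    rw [mordellH', hf]
    rw [show (∫ x : ℝ, ((x : ℂ) + I * ρ) ^ c *
        Complex.exp (-(π : ℂ) * T * x ^ 2 / (γ ^ 2 * k * z) + 2 * π * x * α) /
        Complex.cosh (π * ((x : ℂ) + I * ρ))) =
        |l⁻¹|⁻¹ • ∫ x : ℝ, (((l * x : ℝ) : ℂ) + I * ρ) ^ c *
        Complex.exp (-(π : ℂ) * T * ((l * x : ℝ) : ℂ) ^ 2 / (γ ^ 2 * k * z)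
          + 2 * π * ((l * x : ℝ) : ℂ) * α) /
        Complex.cosh (π * (((l * x : ℝ) : ℂ) + I * ρ)) from by
      rw [MeasureTheory.Measure.integral_comp_mul_left
        (fun x : ℝ => ((x : ℂ) + I * ρ) ^ c *
          Complex.exp (-(π : ℂ) * T * (x : ℂ) ^ 2 / (γ ^ 2 * k * z) + 2 * π * (x : ℂ) * α) /
          Complex.cosh (π * ((x : ℂ) + I * ρ))) l, smul_smul]
      rw [_root_.abs_of_pos (inv_pos.mpr hlpos), inv_inv, mul_inv_cancel₀ hlpos.ne', one_smul]]
    rw [_root_.abs_of_pos (inv_pos.mpr hlpos), inv_inv]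
    rw [mul_smul_comm, ← MeasureTheory.integral_const_mul]
    congr 1
    refine integral_congr_ae (G := ℂ) (Filter.Eventually.of_forall fun t => ?_)
    dsimp only
    push_cast
    have hexp : (-(π : ℂ) * ↑T * ((l : ℂ) * ↑t) ^ 2 / (↑γ ^ 2 * ↑k * z)
        + 2 * ↑π * ((l : ℂ) * ↑t) * ↑α) + (β : ℂ) * ↑π / (↑k * z)
        = -(π : ℂ) * ↑β * ((t : ℂ) ^ 2 - 1) / (↑k * z) + 2 * ↑π * ↑l * ↑α * ↑t := by
      have hγ2 : ((γ : ℂ)) ^ 2 * ↑k * z ≠ 0 := by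
        rw [mul_assoc]; exact mul_ne_zero (pow_ne_zero _ hγC) hkzne
      have e : (T : ℂ) * ((l : ℂ) * t) ^ 2 / (γ ^ 2 * k * z) = β * t ^ 2 / (k * z) := by
        rw [div_eq_div_iff hγ2 hkzne]
        linear_combination ((t : ℂ) ^ 2 * (k * z)) * hTlC
      have e2 : -(π : ℂ) * T * ((l : ℂ) * t) ^ 2 / (γ ^ 2 * k * z)
          = -(π : ℂ) * ((T : ℂ) * ((l : ℂ) * t) ^ 2 / (γ ^ 2 * k * z)) := by ring
      rw [e2, e]
      ring
    rw [mul_comm (Complex.exp _), mul_div_assoc, mul_assoc, div_mul_eq_mul_div,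
      ← Complex.exp_add, hexp, mul_div_assoc]
    rw [mul_div_assoc]
  -- split the integral
  have hsplit : (∫ t : ℝ, f t) = (∫ t in Set.Ioc (-1 : ℝ) 1, f t)
      + ∫ t in (Set.Ioc (-1 : ℝ) 1)ᶜ, f t :=
    (integral_add_compl measurableSet_Ioc hInt).symm
  rw [show ((β : ℝ) : ℂ) * (π : ℂ) / ((k : ℂ) * z) = (β : ℂ) * π / (k * z) from rfl, key,
    intervalIntegral.integral_of_le (by norm_num : (-1 : ℝ) ≤ 1), hsplit]
  have hrw : l • ((∫ t in Set.Ioc (-1 : ℝ) 1, f t) + ∫ t in (Set.Ioc (-1 : ℝ) 1)ᶜ, f t)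
      - (l : ℂ) * ∫ t in Set.Ioc (-1 : ℝ) 1, f t
      = (l : ℂ) * ∫ t in (Set.Ioc (-1 : ℝ) 1)ᶜ, f t := by
    rw [Complex.real_smul]; ring
  rw [hrw, norm_mul, Complex.norm_real, Real.norm_eq_abs, _root_.abs_of_pos hlpos]
  -- bound the tail
  have htail : ‖∫ t in (Set.Ioc (-1 : ℝ) 1)ᶜ, f t‖ ≤ A * I0 := by
    refine le_trans (norm_integral_le_integral_norm f) ?_
    have hmono : (∫ t in (Set.Ioc (-1 : ℝ) 1)ᶜ, ‖f t‖)
        ≤ ∫ t in (Set.Ioc (-1 : ℝ) 1)ᶜ, A * Real.exp (-p * t ^ 2 + q * |t|) := by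
      refine setIntegral_mono_on hInt.norm.integrableOn
        (((HS_gauss p q hppos).const_mul A).integrableOn) measurableSet_Ioc.compl ?_
      intro t ht
      simp only [Set.mem_compl_iff, Set.mem_Ioc, not_and, not_le] at ht
      have h1t : 1 ≤ t ^ 2 := by
        rcases le_or_gt t (-1) with h | h
        · nlinarith
        · nlinarith [ht h]
      exact hboundtail t h1t
    refine le_trans hmono ?_
    refine le_trans (setIntegral_le_integral ((HS_gauss p q hppos).const_mul A)
      (Filter.Eventually.of_forall fun t => by positivity)) ?_
    rw [MeasureTheory.integral_const_mul, ← hI0]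
  calc l * ‖∫ t in (Set.Ioc (-1 : ℝ) 1)ᶜ, f t‖ ≤ l * (A * I0) :=
        mul_le_mul_of_nonneg_left htail hlpos.le
    _ ≤ l * A * I0 + 1 := by nlinarith
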